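/- Let X be n×k of rank k, Ω n×n positive definite of Rao's form Ω = X Γ X^T + Z Δ Z^T with Γ, Δ positive definite, and K₁, K₂ k×k positive definite. For y ∈ ℝⁿ, the equality K₁ X^T (Ω + X K₁ X^T)^{-1} y = K₂ X^T (I_n + X K₂ X^T)^{-1} y holds if and only if y ∈ { C(X) ∩ N[(K₂ X^T Ω − K₁ X^T)(Ω + X K₁ X^T)^{-1}] } ⊕ C(X)^⊥, where C denotes column space and N denotes null space. -/

import Mathlib

open Matrix

theorem stmt_15 {n k : ℕ} (hnk : k < n)
    (X : Matrix (Fin n) (Fin k) ℝ) (hX : X.rank = k)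
    (Z : Matrix (Fin n) (Fin (n - k)) ℝ) (hXZ : Xᵀ * Z = 0) (hZ : Z.rank = n - k)
    (Γ : Matrix (Fin k) (Fin k) ℝ) (hΓ : Γ.PosDef)
    (Δ : Matrix (Fin (n - k)) (Fin (n - k)) ℝ) (hΔ : Δ.PosDef)
    (Ω : Matrix (Fin n) (Fin n) ℝ) (hΩrep : Ω = X * Γ * Xᵀ + Z * Δ * Zᵀ)
    (hΩ : Ω.PosDef)
    (K₁ K₂ : Matrix (Fin k) (Fin k) ℝ) (hK₁ : K₁.PosDef) (hK₂ : K₂.PosDef)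
    (y : Fin n → ℝ) :
    (K₁ * Xᵀ * (Ω + X * K₁ * Xᵀ)⁻¹) *ᵥ y = (K₂ * Xᵀ * (1 + X * K₂ * Xᵀ)⁻¹) *ᵥ y ↔
      y ∈ (LinearMap.range X.mulVecLin ⊓
              LinearMap.ker ((K₂ * Xᵀ * Ω - K₁ * Xᵀ) * (Ω + X * K₁ * Xᵀ)⁻¹).mulVecLin)
            ⊔ LinearMap.ker Xᵀ.mulVecLin := by
  classical
  -- S = XᵀX is positive definite since X has full column rank
  have hkerX : LinearMap.ker X.mulVecLin = ⊥ := by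
    have h := X.mulVecLin.finrank_range_add_finrank_ker
    rw [show Module.finrank ℝ (LinearMap.range X.mulVecLin) = k from hX] at h
    simp only [Module.finrank_fin_fun] at h
    exact Submodule.finrank_eq_zero.mp (by omega)
  have hS : (Xᵀ * X).PosDef := by
    have hsd : (Xᵀ * X).PosSemidef := by
      simpa using Matrix.posSemidef_conjTranspose_mul_self X
    refine Matrix.PosDef.of_dotProduct_mulVec_pos hsd.1 (fun x hx => lt_of_le_of_ne (by simpa using hsd.dotProduct_mulVec_nonneg x) ?_)
    intro h
    apply hx
    have h0 : (Xᵀ * X) *ᵥ x = 0 := (hsd.dotProduct_mulVec_zero_iff x).mp (by simpa using h.symm)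
    have hx' : x ∈ LinearMap.ker (Xᵀ * X).mulVecLin := h0
    rw [Matrix.ker_mulVecLin_transpose_mul_self, hkerX] at hx'
    simpa using hx'
  set S : Matrix (Fin k) (Fin k) ℝ := Xᵀ * X with hSdef
  set G : Matrix (Fin k) (Fin k) ℝ := Γ + K₁ with hGdef
  set P : Matrix (Fin n) (Fin n) ℝ := Ω + X * K₁ * Xᵀ with hPdef
  set Q : Matrix (Fin n) (Fin n) ℝ := 1 + X * K₂ * Xᵀ with hQdef
  set R : Matrix (Fin k) (Fin k) ℝ := K₂⁻¹ + S with hRdef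
  have hG : G.PosDef := hΓ.add hK₁
  have hP : P.PosDef :=
    hΩ.add_posSemidef (by simpa using hK₁.posSemidef.mul_mul_conjTranspose_same X)
  have hQp : Q.PosDef :=
    Matrix.PosDef.add_posSemidef Matrix.PosDef.one
      (by simpa using hK₂.posSemidef.mul_mul_conjTranspose_same X)
  have hR : R.PosDef := hK₂.inv.add hS
  haveI iS : Invertible S := hS.isUnit.invertible
  haveI iG : Invertible G := hG.isUnit.invertible
  haveI iP : Invertible P := hP.isUnit.invertible
  haveI iQ : Invertible Q := hQp.isUnit.invertible
  haveI iR : Invertible R := hR.isUnit.invertible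
  haveI iK1 : Invertible K₁ := hK₁.isUnit.invertible
  haveI iK2 : Invertible K₂ := hK₂.isUnit.invertible
  -- basic matrix identities
  have hXΩ : Xᵀ * Ω = S * (Γ * Xᵀ) := by
    rw [hΩrep, Matrix.mul_add]
    rw [show Xᵀ * (Z * Δ * Zᵀ) = (Xᵀ * Z) * (Δ * Zᵀ) by simp [Matrix.mul_assoc], hXZ]
    simp [hSdef, Matrix.mul_assoc]
  have hXP : Xᵀ * P = S * (G * Xᵀ) := by
    rw [hPdef, Matrix.mul_add, hXΩ, hGdef]
    simp [hSdef, Matrix.mul_add, Matrix.add_mul, Matrix.mul_assoc]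
  have hXPinv : Xᵀ * P⁻¹ = G⁻¹ * (S⁻¹ * Xᵀ) := by
    have h1 : S * (G * (Xᵀ * P⁻¹)) = Xᵀ := by
      calc S * (G * (Xᵀ * P⁻¹)) = (S * (G * Xᵀ)) * P⁻¹ := by simp [Matrix.mul_assoc]
        _ = (Xᵀ * P) * P⁻¹ := by rw [hXP]
        _ = Xᵀ := by rw [Matrix.mul_assoc, Matrix.mul_inv_of_invertible, Matrix.mul_one]
    calc Xᵀ * P⁻¹ = G⁻¹ * (S⁻¹ * (S * (G * (Xᵀ * P⁻¹)))) := by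
          rw [Matrix.inv_mul_cancel_left_of_invertible, Matrix.inv_mul_cancel_left_of_invertible]
      _ = G⁻¹ * (S⁻¹ * Xᵀ) := by rw [h1]
  have hXQ : Xᵀ * Q = R * (K₂ * Xᵀ) := by
    rw [hQdef, Matrix.mul_add, Matrix.mul_one, hRdef, Matrix.add_mul,
      Matrix.inv_mul_cancel_left_of_invertible]
    simp [hSdef, Matrix.mul_assoc]
  have hXQinv : K₂ * (Xᵀ * Q⁻¹) = R⁻¹ * Xᵀ := by
    have h2 : R * (K₂ * (Xᵀ * Q⁻¹)) = Xᵀ := by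
      calc R * (K₂ * (Xᵀ * Q⁻¹)) = (R * (K₂ * Xᵀ)) * Q⁻¹ := by simp [Matrix.mul_assoc]
        _ = (Xᵀ * Q) * Q⁻¹ := by rw [hXQ]
        _ = Xᵀ := by rw [Matrix.mul_assoc, Matrix.mul_inv_of_invertible, Matrix.mul_one]
    calc K₂ * (Xᵀ * Q⁻¹) = R⁻¹ * (R * (K₂ * (Xᵀ * Q⁻¹))) := by
          rw [Matrix.inv_mul_cancel_left_of_invertible]
      _ = R⁻¹ * Xᵀ := by rw [h2]
  -- the two matrices on the LHS, and the matrix M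
  have hA1 : K₁ * Xᵀ * P⁻¹ = K₁ * (G⁻¹ * (S⁻¹ * Xᵀ)) := by
    rw [Matrix.mul_assoc, hXPinv]
  have hA2 : K₂ * Xᵀ * Q⁻¹ = R⁻¹ * Xᵀ := by
    rw [Matrix.mul_assoc, hXQinv]
  have hMfact : (K₂ * Xᵀ * Ω - K₁ * Xᵀ) * P⁻¹ =
      K₂ * (S * (Γ * (G⁻¹ * (S⁻¹ * Xᵀ)))) - K₁ * (G⁻¹ * (S⁻¹ * Xᵀ)) := by
    rw [Matrix.sub_mul, hA1]
    congr 1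
    calc K₂ * Xᵀ * Ω * P⁻¹ = K₂ * ((Xᵀ * Ω) * P⁻¹) := by simp [Matrix.mul_assoc]
      _ = K₂ * ((S * (Γ * Xᵀ)) * P⁻¹) := by rw [hXΩ]
      _ = K₂ * (S * (Γ * (Xᵀ * P⁻¹))) := by simp [Matrix.mul_assoc]
      _ = K₂ * (S * (Γ * (G⁻¹ * (S⁻¹ * Xᵀ)))) := by rw [hXPinv]
  -- vector-level abbreviations
  set t : Fin k → ℝ := Xᵀ *ᵥ y with htdef
  set r : Fin k → ℝ := G⁻¹ *ᵥ (S⁻¹ *ᵥ t) with hrdef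
  have ht : S *ᵥ (G *ᵥ r) = t := by
    rw [hrdef]
    simp [Matrix.mulVec_mulVec, Matrix.mul_inv_cancel_right_of_invertible,
      Matrix.mul_inv_of_invertible]
  -- LHS in terms of r and t
  have eL1 : (K₁ * Xᵀ * P⁻¹) *ᵥ y = K₁ *ᵥ r := by
    rw [hA1, hrdef, htdef]
    simp [Matrix.mulVec_mulVec]
  have eL2 : (K₂ * Xᵀ * Q⁻¹) *ᵥ y = R⁻¹ *ᵥ t := by
    rw [hA2, htdef]
    simp [Matrix.mulVec_mulVec]
  have eM : ((K₂ * Xᵀ * Ω - K₁ * Xᵀ) * P⁻¹) *ᵥ y =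
      K₂ *ᵥ (S *ᵥ (Γ *ᵥ r)) - K₁ *ᵥ r := by
    rw [hMfact, Matrix.sub_mulVec, hrdef, htdef]
    simp [Matrix.mulVec_mulVec]
  -- main equivalence : M y = 0 ↔ LHS equality
  have hK2iff : ∀ a b : Fin k → ℝ, K₂ *ᵥ a = b ↔ a = K₂⁻¹ *ᵥ b := by
    intro a b
    constructor
    · intro h; rw [← h, Matrix.mulVec_mulVec, Matrix.inv_mul_of_invertible, Matrix.one_mulVec]
    · intro h; rw [h, Matrix.mulVec_mulVec, Matrix.mul_inv_of_invertible, Matrix.one_mulVec]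
  have hRinj : Function.Injective (R *ᵥ ·) := by
    intro a b h
    have := congrArg (R⁻¹ *ᵥ ·) h
    simpa [Matrix.mulVec_mulVec, Matrix.inv_mul_of_invertible, Matrix.one_mulVec] using this
  have main : ((K₂ * Xᵀ * Ω - K₁ * Xᵀ) * P⁻¹) *ᵥ y = 0 ↔
      (K₁ * Xᵀ * P⁻¹) *ᵥ y = (K₂ * Xᵀ * Q⁻¹) *ᵥ y := by
    rw [eM, eL1, eL2, sub_eq_zero]
    rw [hK2iff]
    constructor
    · intro h
      have hRt : R *ᵥ (K₁ *ᵥ r) = t := by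
        rw [← ht, hRdef, Matrix.add_mulVec, ← h]
        rw [hGdef, Matrix.add_mulVec (A := Γ) (B := K₁), Matrix.mulVec_add]
      have : R *ᵥ (K₁ *ᵥ r) = R *ᵥ (R⁻¹ *ᵥ t) := by
        rw [hRt, Matrix.mulVec_mulVec, Matrix.mul_inv_of_invertible, Matrix.one_mulVec]
      exact hRinj this
    · intro h
      have hRt : R *ᵥ (K₁ *ᵥ r) = t := by
        rw [h, Matrix.mulVec_mulVec, Matrix.mul_inv_of_invertible, Matrix.one_mulVec]
      have hexp : K₂⁻¹ *ᵥ (K₁ *ᵥ r) + S *ᵥ (K₁ *ᵥ r) = S *ᵥ (Γ *ᵥ r) + S *ᵥ (K₁ *ᵥ r) := by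
        rw [← Matrix.add_mulVec, ← hRdef, hRt, ← ht, hGdef,
          Matrix.add_mulVec (A := Γ) (B := K₁), Matrix.mulVec_add]
      have := add_right_cancel hexp
      exact this.symm
  -- M kills everything orthogonal to the columns of X
  have hMv : ∀ v : Fin n → ℝ, Xᵀ *ᵥ v = 0 →
      ((K₂ * Xᵀ * Ω - K₁ * Xᵀ) * P⁻¹) *ᵥ v = 0 := by
    intro v hv
    rw [hMfact, Matrix.sub_mulVec]
    simp [← Matrix.mulVec_mulVec, hv]
  rw [← main]
  constructor
  · -- M y = 0 → membership
    intro hMy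
    set u : Fin n → ℝ := (X * (S⁻¹ * Xᵀ)) *ᵥ y with hudef
    have huX : Xᵀ *ᵥ u = Xᵀ *ᵥ y := by
      rw [hudef, Matrix.mulVec_mulVec, ← Matrix.mul_assoc, ← Matrix.mul_assoc, ← hSdef,
        Matrix.mul_inv_of_invertible, Matrix.one_mul]
    have hvker : Xᵀ *ᵥ (y - u) = 0 := by
      rw [Matrix.mulVec_sub, huX, sub_self]
    have hMu : ((K₂ * Xᵀ * Ω - K₁ * Xᵀ) * P⁻¹) *ᵥ u = 0 := by
      have : u = y - (y - u) := by abel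
      rw [this, Matrix.mulVec_sub, hMy, hMv _ hvker, sub_self]
    refine Submodule.mem_sup.mpr ⟨u, ⟨⟨(S⁻¹ * Xᵀ) *ᵥ y, ?_⟩, ?_⟩, y - u, ?_, by abel⟩
    · simp [hudef, Matrix.mulVec_mulVec]
    · exact hMu
    · exact hvker
  · -- membership → M y = 0
    intro hy
    rcases Submodule.mem_sup.mp hy with ⟨u, hu, v, hv, rfl⟩
    have hMu : ((K₂ * Xᵀ * Ω - K₁ * Xᵀ) * P⁻¹) *ᵥ u = 0 := hu.2
    have hvk : Xᵀ *ᵥ v = 0 := hv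
    rw [Matrix.mulVec_add, hMu, hMv _ hvk, add_zero]
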